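/- Second robustness of the augmented functional: if the true outcome mean g_{s,a}(X) = E[Y | X, S=s, A=a] is used but arbitrary (possibly incorrect) functions p*(X) and e*_{s,a}(X) (bounded away from 0 and 1 appropriately) replace the true propensity functions in the weight, the population value of (1/ζ)·E[ I(S=1)·g_{s,a}(X) + w*_{s,a}(X,S,A)·(Y − g_{s,a}(X)) ] still equals γ_{s,a}, where w*_{s,a} uses p* and e*_{s,a} in place of the true functions. -/
import Mathlib


open scoped Classical BigOperators
open Finset

noncomputable section

/-- Indicator of a proposition. -/
def ind (P : Prop) : ℝ := if P then 1 else 0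

/-- Expectation with respect to weights `p` on a finite outcome space. -/
def pexp {Ω : Type*} [Fintype Ω] (p : Ω → ℝ) (f : Ω → ℝ) : ℝ := ∑ ω, p ω * f ω

/-- Probability of an event. -/
def prob {Ω : Type*} [Fintype Ω] (p : Ω → ℝ) (B : Ω → Prop) : ℝ :=
  pexp p (fun ω => ind (B ω))

/-- Conditional expectation of `f` given event `B`. -/
def cexp {Ω : Type*} [Fintype Ω] (p : Ω → ℝ) (f : Ω → ℝ) (B : Ω → Prop) : ℝ :=
  pexp p (fun ω => f ω * ind (B ω)) / prob p B

/-- Conditional probability of `B` given `C`. -/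
def cprob {Ω : Type*} [Fintype Ω] (p : Ω → ℝ) (B C : Ω → Prop) : ℝ :=
  prob p (fun ω => B ω ∧ C ω) / prob p C

/-- Conditional outcome mean `g_{s,a}(x) = E[Y | X = x, S = s, A = a]`. -/
def gfun {Ω 𝒳 : Type*} [Fintype Ω] (p : Ω → ℝ) (X : Ω → 𝒳) (S A : Ω → ℕ)
    (Y : Ω → ℝ) (s a : ℕ) (x : 𝒳) : ℝ :=
  cexp p Y (fun ω => X ω = x ∧ S ω = s ∧ A ω = a)

/-- Standardized functional `γ_{s,a} = E[ E[Y | X, S=s, A=a] | S=1 ]`. -/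
def gam {Ω 𝒳 : Type*} [Fintype Ω] (p : Ω → ℝ) (X : Ω → 𝒳) (S A : Ω → ℕ)
    (Y : Ω → ℝ) (s a : ℕ) : ℝ :=
  cexp p (fun ω => gfun p X S A Y s a (X ω)) (fun ω => S ω = 1)

/-- Participation probability `p_s(x) = Pr[S = s | X = x]`. -/
def psel {Ω 𝒳 : Type*} [Fintype Ω] (p : Ω → ℝ) (X : Ω → 𝒳) (S : Ω → ℕ)
    (s : ℕ) (x : 𝒳) : ℝ :=
  cprob p (fun ω => S ω = s) (fun ω => X ω = x)

/-- Treatment probability `e_{s,a}(x) = Pr[A = a | X = x, S = s]`. -/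
def etrt {Ω 𝒳 : Type*} [Fintype Ω] (p : Ω → ℝ) (X : Ω → 𝒳) (S A : Ω → ℕ)
    (s a : ℕ) (x : 𝒳) : ℝ :=
  cprob p (fun ω => A ω = a) (fun ω => X ω = x ∧ S ω = s)

/-- Weight `w_{s,a}(X,S,A) = I(S=s, A=a) p_1(X) / (e_{s,a}(X) p_s(X))`. -/
def wgt {Ω 𝒳 : Type*} [Fintype Ω] (p : Ω → ℝ) (X : Ω → 𝒳) (S A : Ω → ℕ)
    (s a : ℕ) (ω : Ω) : ℝ :=
  ind (S ω = s ∧ A ω = a) * psel p X S 1 (X ω) /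
    (etrt p X S A s a (X ω) * psel p X S s (X ω))

/-- Influence function `Γ_{s,a}(O)`. -/
def Gam {Ω 𝒳 : Type*} [Fintype Ω] (p : Ω → ℝ) (X : Ω → 𝒳) (S A : Ω → ℕ)
    (Y : Ω → ℝ) (s a : ℕ) (ω : Ω) : ℝ :=
  (1 / prob p (fun ω' => S ω' = 1)) *
    (ind (S ω = 1) * (gfun p X S A Y s a (X ω) - gam p X S A Y s a)
      + wgt p X S A s a ω * (Y ω - gfun p X S A Y s a (X ω)))

/-- Variance of `f` under `p`. -/
def pvar {Ω : Type*} [Fintype Ω] (p : Ω → ℝ) (f : Ω → ℝ) : ℝ :=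
  pexp p (fun ω => (f ω - pexp p f) ^ 2)


lemma keylem {Ω 𝒳 : Type*} [Fintype Ω] (p : Ω → ℝ)
    (hp0 : ∀ ω, 0 ≤ p ω)
    (X : Ω → 𝒳) (S A : Ω → ℕ) (Y : Ω → ℝ) (s a : ℕ) (x : 𝒳) :
    ∑ ω, p ω * (ind (X ω = x ∧ S ω = s ∧ A ω = a) *
      (Y ω - gfun p X S A Y s a x)) = 0 := by
  classical
  set B := fun ω => X ω = x ∧ S ω = s ∧ A ω = a with hB
  have hD : prob p B = ∑ ω, p ω * ind (B ω) := by simp [prob, pexp]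
  by_cases hD0 : prob p B = 0
  · apply Finset.sum_eq_zero
    intro ω _
    have hnn : ∀ ω' ∈ Finset.univ, (0:ℝ) ≤ p ω' * ind (B ω') := by
      intro ω' _
      have : (0:ℝ) ≤ ind (B ω') := by unfold ind; split <;> norm_num
      exact mul_nonneg (hp0 ω') this
    have hz : p ω * ind (B ω) = 0 :=
      (Finset.sum_eq_zero_iff_of_nonneg hnn).mp (by rw [← hD]; exact hD0) ω
        (Finset.mem_univ ω)
    calc p ω * (ind (B ω) * (Y ω - gfun p X S A Y s a x))
        = (p ω * ind (B ω)) * (Y ω - gfun p X S A Y s a x) := by ring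
      _ = 0 := by rw [hz]; ring
  · have hgx : gfun p X S A Y s a x
        = (∑ ω, p ω * (Y ω * ind (B ω))) / prob p B := by
      simp [gfun, cexp, pexp, hB]
    have expand : ∑ ω, p ω * (ind (B ω) * (Y ω - gfun p X S A Y s a x))
        = (∑ ω, p ω * (Y ω * ind (B ω)))
          - gfun p X S A Y s a x * ∑ ω, p ω * ind (B ω) := by
      rw [Finset.mul_sum, ← Finset.sum_sub_distrib]
      apply Finset.sum_congr rfl
      intro ω _; ring
    rw [expand, hgx, ← hD, div_mul_cancel₀ _ hD0, sub_self]

theorem statement7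
    {Ω 𝒳 : Type*} [Fintype Ω] (p : Ω → ℝ)
    (hp0 : ∀ ω, 0 ≤ p ω) (hp1 : ∑ ω, p ω = 1)
    (X : Ω → 𝒳) (S A : Ω → ℕ) (Y : Ω → ℝ) (s a : ℕ) (pstar estar : 𝒳 → ℝ)
    (hpstar : ∀ x, 0 < pstar x ∧ pstar x < 1)
    (hestar : ∀ x, 0 < estar x ∧ estar x < 1)
    (hS : 0 < prob p (fun ω => S ω = 1))
    (hposS : ∀ x, 0 < prob p (fun ω => X ω = x ∧ S ω = 1) → 0 < psel p X S s x)
    (hposA : ∀ x, 0 < prob p (fun ω => X ω = x ∧ S ω = 1) → 0 < etrt p X S A s a x) :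
    (1 / prob p (fun ω => S ω = 1)) *
        pexp p (fun ω =>
          ind (S ω = 1) * gfun p X S A Y s a (X ω) +
            ind (S ω = s ∧ A ω = a) *
              (pstar (X ω) /
                (estar (X ω) * (if s = 1 then pstar (X ω) else 1 - pstar (X ω)))) *
              (Y ω - gfun p X S A Y s a (X ω))) =
      gam p X S A Y s a := by
  classical
  set g := gfun p X S A Y s a with hg
  set hfun : 𝒳 → ℝ := fun x =>
    pstar x / (estar x * (if s = 1 then pstar x else 1 - pstar x)) with hhfun
  have split : pexp p (fun ω =>
      ind (S ω = 1) * g (X ω) +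
        ind (S ω = s ∧ A ω = a) * hfun (X ω) * (Y ω - g (X ω)))
      = pexp p (fun ω => ind (S ω = 1) * g (X ω))
        + pexp p (fun ω => ind (S ω = s ∧ A ω = a) * hfun (X ω) * (Y ω - g (X ω))) := by
    simp [pexp, mul_add, Finset.sum_add_distrib]
  have T2 : pexp p (fun ω =>
      ind (S ω = s ∧ A ω = a) * hfun (X ω) * (Y ω - g (X ω))) = 0 := by
    unfold pexp
    rw [← Finset.sum_fiberwise_of_maps_to
      (g := X) (t := Finset.univ.image X)
      (fun ω _ => Finset.mem_image_of_mem X (Finset.mem_univ ω))]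
    apply Finset.sum_eq_zero
    intro x _
    have inner : ∑ ω ∈ Finset.univ.filter (fun ω => X ω = x),
        p ω * (ind (S ω = s ∧ A ω = a) * hfun (X ω) * (Y ω - g (X ω)))
        = hfun x * ∑ ω ∈ Finset.univ.filter (fun ω => X ω = x),
            p ω * (ind (X ω = x ∧ S ω = s ∧ A ω = a) * (Y ω - g x)) := by
      rw [Finset.mul_sum]
      apply Finset.sum_congr rfl
      intro ω hω
      have hx : X ω = x := (Finset.mem_filter.mp hω).2
      simp only [hx, true_and]
      ring
    rw [inner]
    have ext : ∑ ω ∈ Finset.univ.filter (fun ω => X ω = x),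
        p ω * (ind (X ω = x ∧ S ω = s ∧ A ω = a) * (Y ω - g x))
        = ∑ ω, p ω * (ind (X ω = x ∧ S ω = s ∧ A ω = a) * (Y ω - g x)) := by
      apply Finset.sum_subset (Finset.filter_subset _ _)
      intro ω _ hω
      have hx : ¬ (X ω = x) := by
        simpa using hω
      simp [ind, hx]
    rw [ext, hg, keylem p hp0 X S A Y s a x, mul_zero]
  have T1 : pexp p (fun ω => ind (S ω = 1) * g (X ω))
      = pexp p (fun ω => g (X ω) * ind (S ω = 1)) := by
    simp [pexp, mul_comm]
  rw [split, T2, add_zero, T1]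
  rw [gam, cexp]
  rw [hg]
  field_simp
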